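/- Let 1 ≤ m ≤ n and let (z_1,...,z_n) be complex numbers with |z_k| ≥ 1 for all k. Then max over ν = 1,...,2nm − m(m+1) + 1 of |∑_{k=1}^n z_k^ν| is at least √m. -/

import Mathlib

open Finset Complex ComplexConjugate MvPolynomial


lemma newtonNeg {α : Type} [DecidableEq α] (s : Finset α) (u : α → ℂ) (S : ℕ → ℝ)
    (hr : ∀ ν, 1 ≤ ν → ν ≤ s.card + 1 → (∑ a ∈ s, u a ^ ν) = (S ν : ℂ))
    (hneg : ∀ ν, 1 ≤ ν → ν ≤ s.card + 1 → S ν < 0) : False := by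
  classical
  set ι := {x // x ∈ s}
  set uu : ι → ℂ := fun i => u i.1 with huu
  set E : ℕ → ℂ := fun k => MvPolynomial.aeval uu (esymm ι ℂ k) with hE
  set R : ℕ → ℝ := fun k => ((-1 : ℂ) ^ k * E k).re with hR
  have hP : ∀ ν, 1 ≤ ν → ν ≤ s.card + 1 →
      MvPolynomial.aeval uu (psum ι ℂ ν) = (S ν : ℂ) := by
    intro ν h1 h2
    have h3 : (MvPolynomial.aeval uu) (psum ι ℂ ν) = ∑ x : ι, u x.1 ^ ν := by
      simp [psum, huu]
    rw [h3, Finset.sum_coe_sort s (fun a => u a ^ ν)]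
    exact hr ν h1 h2
  have key : ∀ k : ℕ, k ≤ s.card + 1 → 0 < R k ∧ (-1 : ℂ) ^ k * E k = (R k : ℂ) := by
    intro k
    induction k using Nat.strong_induction_on with
    | _ k ih =>
      intro hk
      rcases Nat.eq_zero_or_pos k with h0 | hpos
      · subst h0
        simp [R, E, esymm_zero]
      · have hid := MvPolynomial.mul_esymm_eq_sum ι ℂ k
        have hid2 := congrArg (MvPolynomial.aeval uu) hid
        simp only [map_mul, map_pow, map_sum, map_neg, map_one, map_natCast] at hid2
        have hterm : ∀ a ∈ filter (fun a : ℕ × ℕ => a.1 < k) (antidiagonal k),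
            (-1:ℂ) ^ a.1 * (MvPolynomial.aeval uu) (esymm ι ℂ a.1) *
              (MvPolynomial.aeval uu) (psum ι ℂ a.2) = ((R a.1 * S a.2 : ℝ) : ℂ) := by
          intro a ha
          simp only [mem_filter, Finset.HasAntidiagonal.mem_antidiagonal] at ha
          obtain ⟨hsum, hlt⟩ := ha
          have h2 : 1 ≤ a.2 := by omega
          have h2' : a.2 ≤ s.card + 1 := by omega
          have hQ := ih a.1 hlt (by omega)
          have hEa : (MvPolynomial.aeval uu) (esymm ι ℂ a.1) = (-1:ℂ)^a.1 * (R a.1 : ℂ) := by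
            have h5 := hQ.2
            have hsq : (-1:ℂ)^a.1 * ((-1:ℂ)^a.1 * E a.1) = (-1:ℂ)^a.1 * (R a.1 : ℂ) :=
              congrArg _ h5
            rwa [← mul_assoc, ← pow_add, ← two_mul, pow_mul, neg_one_sq, one_pow, one_mul] at hsq
          rw [hEa, hP a.2 h2 h2']
          have hh : (-1:ℂ)^a.1 * (-1:ℂ)^a.1 = 1 := by
            rw [← pow_add, ← two_mul, pow_mul, neg_one_sq, one_pow]
          push_cast
          linear_combination ((R a.1 : ℂ) * (S a.2 : ℂ)) * hh
        rw [Finset.sum_congr rfl hterm, ← Complex.ofReal_sum] at hid2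
        set G : ℝ := ∑ a ∈ filter (fun a : ℕ × ℕ => a.1 < k) (antidiagonal k), R a.1 * S a.2 with hG
        have hGneg : G < 0 := by
          apply Finset.sum_neg
          · intro a ha
            simp only [mem_filter, Finset.HasAntidiagonal.mem_antidiagonal] at ha
            obtain ⟨hsum, hlt⟩ := ha
            have hQ := ih a.1 hlt (by omega)
            have hS := hneg a.2 (by omega) (by omega)
            exact mul_neg_of_pos_of_neg hQ.1 hS
          · exact ⟨(0, k), by simp [mem_filter, Finset.HasAntidiagonal.mem_antidiagonal, hpos]⟩
        have hkne : (k : ℂ) ≠ 0 := Nat.cast_ne_zero.mpr (by omega)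
        have hsign : (-1:ℂ)^k * (-1:ℂ)^(k+1) = -1 := by
          rw [← pow_add]
          have h6 : k + (k+1) = 2*k+1 := by ring
          rw [h6, pow_succ, pow_mul, neg_one_sq, one_pow, one_mul]
        have h3 : (k:ℂ) * ((-1:ℂ)^k * E k) = ((-G : ℝ) : ℂ) := by
          calc (k:ℂ) * ((-1:ℂ)^k * E k) = (-1:ℂ)^k * ((k:ℂ) * E k) := by ring
            _ = (-1:ℂ)^k * ((-1:ℂ)^(k+1) * (G:ℂ)) := by rw [hid2]
            _ = ((-1:ℂ)^k * (-1:ℂ)^(k+1)) * (G:ℂ) := by ring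
            _ = ((-G : ℝ) : ℂ) := by rw [hsign]; push_cast; ring
        have hEk : (-1:ℂ)^k * E k = ((-G / k : ℝ) : ℂ) := by
          apply mul_left_cancel₀ hkne
          rw [h3]
          push_cast
          field_simp
        have hRk : R k = -G / k := by
          show ((-1:ℂ)^k * E k).re = _
          rw [hEk, Complex.ofReal_re]
        constructor
        · rw [hRk]
          exact div_pos (by linarith) (by exact_mod_cast hpos)
        · rw [hRk]
          exact hEk
  have hfin := key (s.card + 1) le_rfl
  have hzero : E (s.card + 1) = 0 := by
    rw [hE]
    have h7 : esymm ι ℂ (s.card + 1) = 0 := by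
      rw [esymm]
      have h8 : (Finset.univ : Finset ι).powersetCard (s.card + 1) = ∅ := by
        rw [Finset.powersetCard_eq_empty]
        have : Fintype.card ι = s.card := Fintype.card_coe s
        simp [Finset.card_univ, this]
      simp [h8]
    simp [h7]
  have h9 := hfin.2
  rw [hzero, mul_zero] at h9
  have h10 : R (s.card + 1) = 0 := by exact_mod_cast h9.symm
  linarith [hfin.1, h10.ge]


lemma cardL (n m : ℕ) (hmn : m ≤ n) :
    (Finset.univ.filter (fun l : Fin n => (l : ℕ) < m)).card = m := by
  have h : Finset.univ.filter (fun l : Fin n => (l : ℕ) < m)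
      = Finset.map (Fin.castLEEmb hmn) Finset.univ := by
    ext x
    simp only [mem_filter, mem_univ, true_and, Finset.mem_map, Fin.castLEEmb]
    constructor
    · intro hx
      exact ⟨⟨x.1, hx⟩, by simp [Fin.castLE]⟩
    · rintro ⟨i, rfl⟩
      simpa using i.2
  rw [h, Finset.card_map, Finset.card_univ, Fintype.card_fin]

lemma negPart (n m : ℕ) (hm : 1 ≤ m) (hmn : m ≤ n) (a : Fin n → ℂ)
    (ha : ∀ k, 1 ≤ ‖a k‖) (hs : ‖∑ k, a k‖ < Real.sqrt m) :
    ∑ p ∈ Finset.univ.filter (fun p : Fin n × Fin n => (p.1 : ℕ) < m ∧ p.1 < p.2),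
      2 * (a p.2 * conj (a p.1)).re < 0 := by
  classical
  set L := Finset.univ.filter (fun l : Fin n => (l : ℕ) < m) with hL
  set PF := Finset.univ.filter (fun p : Fin n × Fin n => (p.1 : ℕ) < m ∧ p.1 < p.2) with hPF
  set s := ∑ k, a k with hsdef
  set t := ∑ l ∈ L, a l with htdef
  set d := ∑ l ∈ L, Complex.normSq (a l) with hddef
  set f : Fin n × Fin n → ℂ := fun p => a p.2 * conj (a p.1) with hf
  set W := ∑ p ∈ PF, f p with hW
  -- step 1: W as double sum
  have hPF2 : PF = (L ×ˢ (Finset.univ : Finset (Fin n))).filter (fun p => p.1 < p.2) := by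
    ext p
    simp only [hPF, hL, mem_filter, mem_univ, true_and, mem_product]
    tauto
  have h1 : W = ∑ l ∈ L, ∑ k ∈ Finset.univ.filter (fun k => l < k), a k * conj (a l) := by
    rw [hW, hPF2, Finset.sum_filter, Finset.sum_product]
    refine Finset.sum_congr rfl fun l _ => ?_
    rw [Finset.sum_filter]
  -- step 2: inner sums via complement
  have h2 : ∀ l : Fin n, ∑ k ∈ Finset.univ.filter (fun k => l < k), a k
      = s - ∑ k ∈ Finset.univ.filter (fun k => k ≤ l), a k := by
    intro l
    have h2a := Finset.sum_filter_add_sum_filter_not Finset.univ (fun k => l < k) a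
    have hnot : Finset.univ.filter (fun k => ¬ l < k) = Finset.univ.filter (fun k => k ≤ l) := by
      ext k; simp [not_lt]
    rw [hnot] at h2a
    rw [hsdef, ← h2a]
    ring
  set B := ∑ l ∈ L, ∑ k ∈ L.filter (fun k => k ≤ l), a k * conj (a l) with hB
  have h3 : ∀ l ∈ L, Finset.univ.filter (fun k : Fin n => k ≤ l) = L.filter (fun k => k ≤ l) := by
    intro l hl
    rw [hL] at hl ⊢
    simp only [mem_filter, mem_univ, true_and] at hl
    ext k
    simp only [mem_filter, mem_univ, true_and]
    exact ⟨fun h => ⟨lt_of_le_of_lt (by exact_mod_cast h) hl, h⟩, fun h => h.2⟩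
  have h4 : W = s * conj t - B := by
    rw [h1]
    have h4a : ∀ l ∈ L, ∑ k ∈ Finset.univ.filter (fun k => l < k), a k * conj (a l)
        = s * conj (a l) - ∑ k ∈ L.filter (fun k => k ≤ l), a k * conj (a l) := by
      intro l hl
      rw [← Finset.sum_mul, h2 l, sub_mul, h3 l hl]
      simp [Finset.sum_mul]
    rw [Finset.sum_congr rfl h4a, Finset.sum_sub_distrib, ← Finset.mul_sum, ← map_sum, ← htdef,
      ← hB]
  -- triangles
  set S1 := (L ×ˢ L).filter (fun p : Fin n × Fin n => p.2 ≤ p.1) with hS1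
  set S2 := (L ×ˢ L).filter (fun p : Fin n × Fin n => p.1 ≤ p.2) with hS2
  have hB1 : B = ∑ p ∈ S1, f p := by
    rw [hS1, Finset.sum_filter, Finset.sum_product, hB]
    refine Finset.sum_congr rfl fun l _ => ?_
    rw [Finset.sum_filter]
  have hcB : conj B = ∑ p ∈ S2, f p := by
    rw [hB1, map_sum]
    refine Finset.sum_bij' (fun p _ => Prod.swap p) (fun p _ => Prod.swap p) ?_ ?_ ?_ ?_ ?_
    · intro p hp
      rw [hS1] at hp
      rw [hS2]
      simp only [mem_filter, mem_product] at hp ⊢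
      exact ⟨⟨hp.1.2, hp.1.1⟩, hp.2⟩
    · intro p hp
      rw [hS2] at hp
      rw [hS1]
      simp only [mem_filter, mem_product] at hp ⊢
      exact ⟨⟨hp.1.2, hp.1.1⟩, hp.2⟩
    · intro p _; simp
    · intro p _; simp
    · intro p _
      simp only [hf, Prod.fst_swap, Prod.snd_swap, map_mul, Complex.conj_conj]
      ring
  have hunion : S1 ∪ S2 = L ×ˢ L := by
    ext p
    simp only [hS1, hS2, Finset.mem_union, mem_filter, mem_product]
    constructor
    · rintro (h | h) <;> exact h.1
    · intro h
      rcases le_total p.2 p.1 with h' | h'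
      · exact Or.inl ⟨h, h'⟩
      · exact Or.inr ⟨h, h'⟩
  have hinter : S1 ∩ S2 = (L ×ˢ L).filter (fun p => p.1 = p.2) := by
    ext p
    simp only [hS1, hS2, Finset.mem_inter, mem_filter, mem_product]
    constructor
    · rintro ⟨⟨hp, h1'⟩, ⟨_, h2'⟩⟩
      exact ⟨hp, le_antisymm h2' h1'⟩
    · rintro ⟨hp, h⟩
      exact ⟨⟨hp, h.ge⟩, ⟨hp, h.le⟩⟩
  have hfull : ∑ p ∈ L ×ˢ L, f p = t * conj t := by
    rw [Finset.sum_product]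
    have hrow : ∀ x ∈ L, ∑ y ∈ L, f (x, y) = t * conj (a x) := by
      intro x _
      simp only [hf]
      rw [← Finset.sum_mul, ← htdef]
    rw [Finset.sum_congr rfl hrow, ← Finset.mul_sum, ← map_sum, ← htdef]
  have hdiag : ∑ p ∈ (L ×ˢ L).filter (fun p => p.1 = p.2), f p = (d : ℂ) := by
    have himg : (L ×ˢ L).filter (fun p : Fin n × Fin n => p.1 = p.2)
        = L.image (fun l => (l, l)) := by
      ext p
      simp only [mem_filter, mem_product, Finset.mem_image]
      constructor
      · rintro ⟨⟨hp1, _⟩, h⟩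
        exact ⟨p.1, hp1, by cases p; simp_all⟩
      · rintro ⟨l, hl, rfl⟩
        exact ⟨⟨hl, hl⟩, rfl⟩
    rw [himg, Finset.sum_image (by intro x _ y _ h; exact (Prod.ext_iff.mp h).1)]
    rw [hddef]
    push_cast
    refine Finset.sum_congr rfl fun l _ => ?_
    rw [hf]
    exact Complex.mul_conj (a l)
  have hBB : B + conj B = t * conj t + (d : ℂ) := by
    rw [hcB, hB1, ← Finset.sum_union_inter, hunion, hinter, hfull, hdiag]
  -- real identity
  have hgoal : ∑ p ∈ PF, 2 * (f p).re = 2 * W.re := by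
    rw [hW, Complex.re_sum, Finset.mul_sum]
  have hreB : B.re + B.re = Complex.normSq t + d := by
    have hc := congrArg Complex.re hBB
    rw [Complex.mul_conj] at hc
    simpa using hc
  rw [hgoal]
  have hWre : W.re = (s * conj t).re - B.re := by rw [h4, Complex.sub_re]
  have h2W : 2 * W.re = 2 * (s * conj t).re - (Complex.normSq t + d) := by
    rw [hWre]; linarith
  have hret : (s * conj t).re ≤ ‖s‖ * ‖t‖ := by
    calc (s * conj t).re ≤ ‖s * conj t‖ := Complex.re_le_norm _
      _ = ‖s‖ * ‖t‖ := by rw [norm_mul, RCLike.norm_conj]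
  have hnst : Complex.normSq t = ‖t‖ ^ 2 := by rw [← Complex.sq_norm]
  have hdm : (m : ℝ) ≤ d := by
    have h1le : ∀ l ∈ L, (1 : ℝ) ≤ Complex.normSq (a l) := by
      intro l _
      have hna : Complex.normSq (a l) = ‖a l‖ ^ 2 := by
        rw [← Complex.sq_norm]
      nlinarith [ha l]
    have hcs := Finset.card_nsmul_le_sum L (fun l => Complex.normSq (a l)) 1 h1le
    rw [hddef]
    calc (m : ℝ) = (L.card : ℝ) * 1 := by rw [hL, cardL n m hmn]; ring
      _ ≤ ∑ l ∈ L, Complex.normSq (a l) := by simpa [nsmul_eq_mul] using hcs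
  have hm0 : (1 : ℝ) ≤ (m : ℝ) := by exact_mod_cast hm
  have hsq : Real.sqrt m * Real.sqrt m = m := Real.mul_self_sqrt (by positivity)
  rw [h2W, hnst]
  rcases eq_or_lt_of_le (norm_nonneg t) with ht | ht
  · have ht0 : t = 0 := norm_eq_zero.mp ht.symm
    rw [ht0]
    simp only [map_zero, mul_zero, Complex.zero_re, norm_zero]
    norm_num
    linarith
  · nlinarith [mul_lt_mul_of_pos_right hs ht, hret, sq_nonneg (Real.sqrt m - ‖t‖), hsq, hdm,
      norm_nonneg s, norm_nonneg t]


lemma sumAux (n : ℕ) : ∀ m : ℕ, m ≤ n →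
    2 * (∑ j ∈ Finset.range m, (n - 1 - j)) + m * (m + 1) = 2 * n * m := by
  intro m
  induction m with
  | zero => simp
  | succ k ih =>
    intro h
    rw [Finset.sum_range_succ]
    have hk := ih (by omega)
    have hz2 : ((n - 1 - k : ℕ) : ℤ) = (n : ℤ) - 1 - k := by omega
    zify at hk ⊢
    rw [hz2]
    linear_combination hk

lemma cardPF (n m : ℕ) (hmn : m ≤ n) :
    (Finset.univ.filter (fun p : Fin n × Fin n => (p.1 : ℕ) < m ∧ p.1 < p.2)).card
      = ∑ j ∈ Finset.range m, (n - 1 - j) := by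
  classical
  rw [Finset.card_filter, ← Finset.univ_product_univ, Finset.sum_product]
  have hrow : ∀ l : Fin n, (∑ k : Fin n, if ((l, k).1 : ℕ) < m ∧ (l, k).1 < (l, k).2 then 1 else 0)
      = if (l : ℕ) < m then n - 1 - (l : ℕ) else 0 := by
    intro l
    by_cases hl : (l : ℕ) < m
    · simp only [hl, true_and, if_true]
      rw [← Finset.card_filter, Finset.filter_lt_eq_Ioi, Fin.card_Ioi]
    · simp [hl]
  rw [Finset.sum_congr rfl (fun l _ => hrow l),
    Fin.sum_univ_eq_sum_range (fun j => if j < m then n - 1 - j else 0) n, ← Finset.sum_filter]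
  congr 1
  ext j
  simp only [Finset.mem_filter, Finset.mem_range]
  omega

theorem stmt_1 (n m : ℕ) (hm : 1 ≤ m) (hmn : m ≤ n) (z : Fin n → ℂ)
    (hz : ∀ k, 1 ≤ ‖z k‖) :
    ∃ ν : ℕ, 1 ≤ ν ∧ ν ≤ 2 * n * m - m * (m + 1) + 1 ∧
      Real.sqrt m ≤ ‖∑ k, z k ^ ν‖ := by
  classical
  by_contra hcon
  push_neg at hcon
  set PF := Finset.univ.filter (fun p : Fin n × Fin n => (p.1 : ℕ) < m ∧ p.1 < p.2) with hPF
  set SF : Finset ((Fin n × Fin n) × Bool) := PF ×ˢ Finset.univ with hSF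
  set u : (Fin n × Fin n) × Bool → ℂ :=
    fun x => cond x.2 (z x.1.2 * conj (z x.1.1)) (conj (z x.1.2) * z x.1.1) with hu
  set S : ℕ → ℝ := fun ν => ∑ p ∈ PF, 2 * ((z p.2) ^ ν * conj ((z p.1) ^ ν)).re with hS
  have hcard : SF.card + 1 ≤ 2 * n * m - m * (m + 1) + 1 := by
    rw [hSF, Finset.card_product, Finset.card_univ, Fintype.card_bool, hPF, cardPF n m hmn]
    have := sumAux n m hmn
    omega
  apply newtonNeg SF u S
  · intro ν h1 h2
    rw [hSF, Finset.sum_product]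
    have hrow : ∀ p ∈ PF, (∑ b : Bool, u (p, b) ^ ν)
        = (((2 * ((z p.2) ^ ν * conj ((z p.1) ^ ν)).re : ℝ)) : ℂ) := by
      intro p _
      rw [Fintype.sum_bool]
      show (z p.2 * conj (z p.1)) ^ ν + (conj (z p.2) * z p.1) ^ ν = _
      rw [mul_pow, mul_pow, ← map_pow, ← map_pow, ← Complex.add_conj]
      congr 1
      rw [map_mul, Complex.conj_conj]
    rw [Finset.sum_congr rfl hrow, ← Complex.ofReal_sum]
  · intro ν h1 h2
    have hb : ‖∑ k, z k ^ ν‖ < Real.sqrt m := hcon ν h1 (le_trans h2 hcard)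
    have key := negPart n m hm hmn (fun k => z k ^ ν)
      (fun k => by rw [norm_pow]; exact one_le_pow₀ (hz k)) hb
    exact key
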